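/- Fix an integer N ≥ 1 and let S be the set defined in the context. Then S does not contain any infinite arithmetic progression with positive irrational gap; that is, there is no x ∈ S and no irrational real number Δ > 0 such that x + nΔ ∈ S for all natural numbers n. -/

import Mathlib

open MeasureTheory

noncomputable section

/-- The geometric sums `β_k = Σ_{j=0}^{k-1} (N+1)^j`. -/
def beta (N k : ℕ) : ℕ := ∑ j ∈ Finset.range k, (N + 1) ^ j

/-- The deleted intervals `Q_i = [i/N, (i+1)/N)`. -/
def Qset (N i : ℕ) : Set ℝ := Set.Ico ((i : ℝ) / N) (((i : ℝ) + 1) / N)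

/-- `R_i = [0,1) \ Q_i`. -/
def Rset (N i : ℕ) : Set ℝ := Set.Ico (0 : ℝ) 1 \ Qset N i

/-- For `m ≥ 0`, the unique `k` with `β_k ≤ m < β_{k+1}`. -/
def kIdx (N m : ℕ) : ℕ := Nat.findGreatest (fun k => beta N k ≤ m) m

/-- `S_m` for nonnegative `m` : `S_0 = R_0`, and `S_m = m + R_{(k mod N)}` for `m > 0`. -/
def Spos (N m : ℕ) : Set ℝ :=
  if m = 0 then Rset N 0 else (fun x => x + (m : ℝ)) '' Rset N (kIdx N m % N)

/-- `S_m` for all integers `m`: for `m < 0`, `S_m = 2m + S_{|m|}`. -/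
def Sm (N : ℕ) (m : ℤ) : Set ℝ :=
  if 0 ≤ m then Spos N m.toNat else (fun x => x + 2 * (m : ℝ)) '' Spos N m.natAbs

/-- The set `S = ⋃_{m ∈ ℤ} S_m`. -/
def SetS (N : ℕ) : Set ℝ := ⋃ m : ℤ, Sm N m

/- ### Auxiliary lemmas -/

lemma hit_up {δ L a s : ℝ} (h0 : 0 < δ) (hL : δ ≤ L) (hs : s ≤ a + 1) :
    ∃ j : ℕ, a + 1 ≤ s + j * δ ∧ s + j * δ < a + 1 + L := by
  refine ⟨⌈(a + 1 - s) / δ⌉₊, ?_, ?_⟩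
  · have h1 : (a + 1 - s) / δ ≤ (⌈(a + 1 - s) / δ⌉₊ : ℝ) := Nat.le_ceil _
    have h2 := (div_le_iff₀ h0).mp h1
    linarith
  · have hnn : 0 ≤ (a + 1 - s) / δ := div_nonneg (by linarith) h0.le
    have h2 : (⌈(a + 1 - s) / δ⌉₊ : ℝ) < (a + 1 - s) / δ + 1 := Nat.ceil_lt_add_one hnn
    have h3 := mul_lt_mul_of_pos_right h2 h0
    rw [add_mul, div_mul_cancel₀ _ h0.ne'] at h3
    linarith

lemma hit_down {δ L a s : ℝ} (h0 : 0 < δ) (hL : δ ≤ L) (hs : a - 1 + L ≤ s) :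
    ∃ j : ℕ, a - 1 ≤ s - j * δ ∧ s - j * δ < a - 1 + L := by
  refine ⟨⌊(s - (a - 1 + L)) / δ⌋₊ + 1, ?_, ?_⟩
  · have hnn : 0 ≤ (s - (a - 1 + L)) / δ := div_nonneg (by linarith) h0.le
    have h1 : (⌊(s - (a - 1 + L)) / δ⌋₊ : ℝ) ≤ (s - (a - 1 + L)) / δ := Nat.floor_le hnn
    have h3 := mul_le_mul_of_nonneg_right h1 h0.le
    rw [div_mul_cancel₀ _ h0.ne'] at h3
    push_cast
    nlinarith
  · have h1 : (s - (a - 1 + L)) / δ < (⌊(s - (a - 1 + L)) / δ⌋₊ : ℝ) + 1 :=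
      Nat.lt_floor_add_one _
    have h3 := mul_lt_mul_of_pos_right h1 h0
    rw [div_mul_cancel₀ _ h0.ne'] at h3
    push_cast
    nlinarith

lemma beta_succ (N k : ℕ) : beta N (k + 1) = beta N k + (N + 1) ^ k :=
  Finset.sum_range_succ _ _

lemma le_beta (N k : ℕ) : k ≤ beta N k := by
  calc k = ∑ _j ∈ Finset.range k, 1 := by simp
  _ ≤ ∑ j ∈ Finset.range k, (N + 1) ^ j :=
      Finset.sum_le_sum fun j _ => Nat.one_le_pow _ _ (Nat.succ_pos N)

lemma beta_mono (N : ℕ) : Monotone (beta N) := fun k l h =>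
  Finset.sum_le_sum_of_subset (Finset.range_subset_range.2 h)

lemma kIdx_eq (N k m : ℕ) (h1 : beta N k ≤ m) (h2 : m < beta N (k + 1)) :
    kIdx N m = k := by
  have hk : k ≤ m := le_trans (le_beta N k) h1
  have hge : k ≤ kIdx N m := Nat.le_findGreatest hk h1
  have hle : kIdx N m ≤ k := by
    by_contra hlt
    push_neg at hlt
    have hne0 : kIdx N m ≠ 0 := by omega
    have hP : beta N (kIdx N m) ≤ m := by
      unfold kIdx at hne0 ⊢
      exact Nat.findGreatest_of_ne_zero (P := fun k => beta N k ≤ m)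
        (m := Nat.findGreatest (fun k => beta N k ≤ m) m) rfl hne0
    have hmono : beta N (k + 1) ≤ beta N (kIdx N m) := beta_mono N hlt
    omega
  omega

lemma Spos_subset (N p : ℕ) : Spos N p ⊆ Set.Ico (p : ℝ) ((p : ℝ) + 1) := by
  unfold Spos
  split_ifs with h
  · subst h
    intro x hx
    simpa using hx.1
  · rintro _ ⟨r, hr, rfl⟩
    have h1 := hr.1
    simp only [Set.mem_Ico] at h1 ⊢
    constructor <;> linarith [h1.1, h1.2]

lemma Sm_subset (N : ℕ) (m : ℤ) : Sm N m ⊆ Set.Ico (m : ℝ) ((m : ℝ) + 1) := by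
  unfold Sm
  split_ifs with h
  · intro y hy
    have h2 := Spos_subset N m.toNat hy
    have hc : ((m.toNat : ℕ) : ℝ) = (m : ℝ) := by exact_mod_cast congrArg (fun z : ℤ => (z : ℝ)) (Int.toNat_of_nonneg h)
    rwa [hc] at h2
  · push_neg at h
    rintro _ ⟨r, hr, rfl⟩
    have h2 := Spos_subset N m.natAbs hr
    have hc : ((m.natAbs : ℕ) : ℝ) = -(m : ℝ) := by
      rw [Nat.cast_natAbs, abs_of_neg h]
      push_cast
      ring
    rw [hc] at h2
    simp only [Set.mem_Ico] at h2 ⊢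
    constructor <;> linarith [h2.1, h2.2]

lemma floor_of_mem_SetS {N : ℕ} {y : ℝ} (hy : y ∈ SetS N) : y ∈ Sm N ⌊y⌋ := by
  rw [SetS, Set.mem_iUnion] at hy
  obtain ⟨m, hm⟩ := hy
  have h2 := Sm_subset N m hm
  have : ⌊y⌋ = m := by
    rw [Int.floor_eq_iff]
    exact ⟨h2.1, h2.2⟩
  rwa [this]

lemma not_fract_mem {N : ℕ} {y : ℝ} (hy : y ∈ SetS N) {p : ℕ} (hp : 0 < p)
    (hfl : ⌊y⌋ = (p : ℤ)) : Int.fract y ∉ Qset N (kIdx N p % N) := by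
  have h1 := floor_of_mem_SetS hy
  rw [hfl] at h1
  rw [Sm, if_pos (Int.ofNat_nonneg p), Int.toNat_natCast, Spos, if_neg hp.ne'] at h1
  obtain ⟨r, hr, hry⟩ := h1
  have hre : r = Int.fract y := by
    simp only at hry
    rw [Int.fract, hfl]
    push_cast
    linarith
  rw [hre] at hr
  exact hr.2

lemma pigeon_aux (N : ℕ) (hN : 1 ≤ N) (Δ : ℝ) (hirr : Irrational Δ)
    {a b : ℕ} (hab : b < a)
    (hd : |Int.fract ((a : ℝ) * Δ) - Int.fract ((b : ℝ) * Δ)| < 1 / (2 * N)) :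
    ∃ q : ℕ, 0 < q ∧ ∃ δ : ℝ, 0 < δ ∧ δ ≤ 1 / N ∧
      (Int.fract ((q : ℝ) * Δ) = δ ∨ Int.fract ((q : ℝ) * Δ) = 1 - δ) := by
  set d := Int.fract ((a : ℝ) * Δ) - Int.fract ((b : ℝ) * Δ) with hdd
  have hN1 : (1 : ℝ) ≤ N := by exact_mod_cast hN
  have hhalf : 1 / (2 * (N : ℝ)) ≤ 1 / 2 := by
    apply one_div_le_one_div_of_le (by norm_num)
    linarith
  have hfull : 1 / (2 * (N : ℝ)) ≤ 1 / N := by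
    apply one_div_le_one_div_of_le (by linarith)
    linarith
  have hdh : |d| < 1 / 2 := lt_of_lt_of_le hd hhalf
  have hq : (((a - b : ℕ) : ℝ)) = (a : ℝ) - (b : ℝ) := by
    push_cast [Nat.cast_sub hab.le]
    ring
  have hfr : Int.fract (((a - b : ℕ) : ℝ) * Δ) = Int.fract d := by
    apply Int.fract_eq_fract.mpr
    refine ⟨⌊(a : ℝ) * Δ⌋ - ⌊(b : ℝ) * Δ⌋, ?_⟩
    rw [hq, hdd]
    simp only [Int.fract]
    push_cast
    ring
  have hirr' : Irrational (((a - b : ℕ) : ℝ) * Δ) := by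
    have hne : ((a - b : ℕ) : ℚ) ≠ 0 := by
      have : a - b ≠ 0 := by omega
      exact_mod_cast this
    have h8 := hirr.ratCast_mul hne
    have h7 : ((((a - b : ℕ) : ℚ)) : ℝ) = ((a - b : ℕ) : ℝ) := by norm_cast
    rwa [h7] at h8
  have hd0 : d ≠ 0 := by
    intro h
    rw [h, Int.fract_zero] at hfr
    rw [Int.fract] at hfr
    have h6 : (((a - b : ℕ) : ℝ) * Δ) = (⌊((a - b : ℕ) : ℝ) * Δ⌋ : ℤ) :=
      sub_eq_zero.mp hfr
    exact hirr'.ne_int _ h6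
  have habs1 : -d ≤ |d| := neg_le_abs d
  have habs2 : d ≤ |d| := le_abs_self d
  rcases lt_or_gt_of_ne hd0 with hneg | hpos
  · -- d < 0 : fract d = d + 1, δ = -d
    refine ⟨a - b, by omega, -d, by linarith, by linarith [hd.le], Or.inr ?_⟩
    have hfd : Int.fract d = d + 1 := by
      have h9 := Int.fract_add_intCast (d + 1) (-1)
      have h5 : d + 1 + ((-1 : ℤ) : ℝ) = d := by push_cast; ring
      rw [h5] at h9
      rw [h9]
      exact Int.fract_eq_self.mpr ⟨by linarith, by linarith⟩
    rw [hfr, hfd]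
    ring
  · -- d > 0 : fract d = d, δ = d
    refine ⟨a - b, by omega, d, hpos, by linarith [hd.le], Or.inl ?_⟩
    rw [hfr, Int.fract_eq_self.mpr ⟨hpos.le, by linarith⟩]

lemma exists_small (N : ℕ) (hN : 1 ≤ N) (Δ : ℝ) (hirr : Irrational Δ) :
    ∃ q : ℕ, 0 < q ∧ ∃ δ : ℝ, 0 < δ ∧ δ ≤ 1 / N ∧
      (Int.fract ((q : ℝ) * Δ) = δ ∨ Int.fract ((q : ℝ) * Δ) = 1 - δ) := by
  have hN0 : (0 : ℝ) < 2 * N := by positivity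
  have hmaps : ∀ n ∈ Finset.range (2 * N + 1),
      ⌊(2 * N : ℝ) * Int.fract ((n : ℝ) * Δ)⌋₊ ∈ Finset.range (2 * N) := by
    intro n _
    rw [Finset.mem_range]
    have h1 : (2 * N : ℝ) * Int.fract ((n : ℝ) * Δ) < (2 * N : ℝ) := by
      nlinarith [Int.fract_lt_one ((n : ℝ) * Δ), Int.fract_nonneg ((n : ℝ) * Δ)]
    have hnn : (0:ℝ) ≤ (2 * N : ℝ) * Int.fract ((n : ℝ) * Δ) :=
      mul_nonneg (by positivity) (Int.fract_nonneg _)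
    rw [Nat.floor_lt hnn]
    exact_mod_cast h1
  obtain ⟨n1, _, n2, _, hne, heq⟩ :=
    Finset.exists_ne_map_eq_of_card_lt_of_maps_to (by simp) hmaps
  have key : ∀ u v : ℝ, 0 ≤ u → 0 ≤ v →
      ⌊(2 * N : ℝ) * u⌋₊ = ⌊(2 * N : ℝ) * v⌋₊ → u - v < 1 / (2 * N) := by
    intro u v hu hv h
    have h1 : (2 * N : ℝ) * u < ⌊(2 * N : ℝ) * u⌋₊ + 1 := Nat.lt_floor_add_one _
    have h2 : (⌊(2 * N : ℝ) * v⌋₊ : ℝ) ≤ (2 * N : ℝ) * v :=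
      Nat.floor_le (by positivity)
    rw [h] at h1
    rw [lt_div_iff₀ hN0]
    nlinarith
  have habs : ∀ u v : ℝ, 0 ≤ u → 0 ≤ v →
      ⌊(2 * N : ℝ) * u⌋₊ = ⌊(2 * N : ℝ) * v⌋₊ → |u - v| < 1 / (2 * N) := by
    intro u v hu hv h
    rw [abs_sub_lt_iff]
    exact ⟨key u v hu hv h, key v u hv hu h.symm⟩
  rcases hne.lt_or_gt with h | h
  · exact pigeon_aux N hN Δ hirr h
      (habs _ _ (Int.fract_nonneg _) (Int.fract_nonneg _) heq.symm)
  · exact pigeon_aux N hN Δ hirr h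
      (habs _ _ (Int.fract_nonneg _) (Int.fract_nonneg _) heq)

/-- `S` contains no infinite arithmetic progression with positive irrational gap. -/
theorem stmt_2 (N : ℕ) (hN : 1 ≤ N) :
    ¬ ∃ x ∈ SetS N, ∃ Δ : ℝ, 0 < Δ ∧ Irrational Δ ∧
      ∀ n : ℕ, x + (n : ℝ) * Δ ∈ SetS N := by
  rintro ⟨x, _hx, Δ, hΔ, hirr, hAP⟩
  obtain ⟨q, hq, δ, hδ0, hδN, hcase⟩ := exists_small N hN Δ hirr
  have hN1 : (1 : ℝ) ≤ N := by exact_mod_cast hN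
  set C : ℝ := Δ + (2 / δ) * (q * Δ) + 1 with hC
  obtain ⟨k1, hk1⟩ := exists_nat_gt x
  obtain ⟨k2, hk2⟩ := pow_unbounded_of_one_lt (y := (N : ℝ) + 1) C (by linarith)
  set k := max (max k1 k2) 1 with hk
  have hk1k : k1 ≤ k := le_trans (le_max_left _ _) (le_max_left _ _)
  have hk2k : k2 ≤ k := le_trans (le_max_right _ _) (le_max_left _ _)
  have h1k : 1 ≤ k := le_max_right _ _
  have hβk : (k : ℝ) ≤ (beta N k : ℝ) := by exact_mod_cast le_beta N k
  have hxβ : x < (beta N k : ℝ) := by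
    have : (k1 : ℝ) ≤ (k : ℝ) := by exact_mod_cast hk1k
    linarith
  have hpow : C ≤ ((N : ℝ) + 1) ^ k := by
    calc C ≤ ((N : ℝ) + 1) ^ k2 := hk2.le
    _ ≤ ((N : ℝ) + 1) ^ k := pow_le_pow_right₀ (by linarith) hk2k
  have hβ1 : (beta N (k + 1) : ℝ) = (beta N k : ℝ) + ((N : ℝ) + 1) ^ k := by
    rw [beta_succ]
    push_cast
    ring
  set n0 : ℕ := ⌈((beta N k : ℝ) - x) / Δ⌉₊ with hn0
  set c : ℝ := x + (n0 : ℝ) * Δ with hc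
  have htnn : 0 ≤ ((beta N k : ℝ) - x) / Δ := div_nonneg (by linarith) hΔ.le
  have hc1 : (beta N k : ℝ) ≤ c := by
    have h1 : ((beta N k : ℝ) - x) / Δ ≤ (n0 : ℝ) := Nat.le_ceil _
    have h2 := (div_le_iff₀ hΔ).mp h1
    rw [hc]; linarith
  have hc2 : c < (beta N k : ℝ) + Δ := by
    have h1 : (n0 : ℝ) < ((beta N k : ℝ) - x) / Δ + 1 := Nat.ceil_lt_add_one htnn
    have h2 := mul_lt_mul_of_pos_right h1 hΔ
    rw [add_mul, div_mul_cancel₀ _ hΔ.ne'] at h2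
    rw [hc]; linarith
  set i := k % N with hi
  have hiN : i < N := Nat.mod_lt _ hN
  set a : ℝ := (i : ℝ) / N with ha
  have ha0 : 0 ≤ a := by positivity
  have haL : a + 1 / N ≤ 1 := by
    rw [ha, ← add_div, div_le_one (by linarith)]
    have : (i : ℝ) + 1 ≤ (N : ℝ) := by exact_mod_cast hiN
    linarith
  have hQ : ∀ t : ℝ, a ≤ t → t < a + 1 / N → t ∈ Qset N i := by
    intro t h1 h2
    rw [Qset, Set.mem_Ico]
    constructor
    · rw [← ha]; exact h1
    · have h4 : ((i : ℝ) + 1) / N = a + 1 / N := by rw [ha, ← add_div]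
      rw [h4]; exact h2
  have hfc0 : 0 ≤ Int.fract c := Int.fract_nonneg c
  have hfc1 : Int.fract c < 1 := Int.fract_lt_one c
  -- the common endgame
  have main : ∀ n : ℕ, (beta N k : ℝ) ≤ x + (n : ℝ) * Δ →
      x + (n : ℝ) * Δ < (beta N (k + 1) : ℝ) →
      Int.fract (x + (n : ℝ) * Δ) ∈ Qset N i → False := by
    intro n h1 h2 h3
    set y := x + (n : ℝ) * Δ with hy
    have hfl : (beta N k : ℤ) ≤ ⌊y⌋ := Int.le_floor.mpr (by exact_mod_cast h1)
    have hfl2 : ⌊y⌋ < (beta N (k + 1) : ℤ) := Int.floor_lt.mpr (by exact_mod_cast h2)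
    have hp0 : (0 : ℤ) ≤ ⌊y⌋ := le_trans (Int.ofNat_nonneg _) hfl
    set p := ⌊y⌋.toNat with hp
    have hpc : ⌊y⌋ = (p : ℤ) := (Int.toNat_of_nonneg hp0).symm
    have hb1 : beta N k ≤ p := by
      rw [hpc] at hfl
      exact_mod_cast hfl
    have hb2 : p < beta N (k + 1) := by
      rw [hpc] at hfl2
      exact_mod_cast hfl2
    have hβpos : 0 < beta N k := lt_of_lt_of_le h1k (le_beta N k)
    have hppos : 0 < p := lt_of_lt_of_le hβpos hb1
    have hnm := not_fract_mem (hAP n) hppos hpc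
    rw [kIdx_eq N k p hb1 hb2] at hnm
    exact hnm h3
  rcases hcase with hf | hf
  · -- ascending case
    obtain ⟨j, hj1, hj2⟩ := hit_up (L := 1 / N) hδ0 hδN
      (show Int.fract c ≤ a + 1 by linarith)
    set n : ℕ := n0 + j * q with hn
    have hyc : x + (n : ℝ) * Δ = c + (j : ℝ) * ((q : ℝ) * Δ) := by
      rw [hc, hn]
      push_cast
      ring
    have hfr : Int.fract (x + (n : ℝ) * Δ) = Int.fract c + (j : ℝ) * δ - 1 := by
      have e1 : Int.fract (x + (n : ℝ) * Δ) =
          Int.fract (Int.fract c + (j : ℝ) * Int.fract ((q : ℝ) * Δ)) := by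
        apply Int.fract_eq_fract.mpr
        refine ⟨⌊c⌋ + j * ⌊(q : ℝ) * Δ⌋, ?_⟩
        rw [hyc]
        simp only [Int.fract]
        push_cast
        ring
      rw [hf] at e1
      have e3 : Int.fract (Int.fract c + (j : ℝ) * δ) = Int.fract c + (j : ℝ) * δ - 1 := by
        have h9 := Int.fract_add_intCast (Int.fract c + (j : ℝ) * δ - 1) (1 : ℤ)
        have h5 : Int.fract c + (j : ℝ) * δ - 1 + ((1 : ℤ) : ℝ) =
            Int.fract c + (j : ℝ) * δ := by push_cast; ring
        rw [h5] at h9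
        rw [h9]
        exact Int.fract_eq_self.mpr ⟨by linarith, by linarith⟩
      rw [e1, e3]
    have hjδ : (j : ℝ) * δ < 2 := by linarith
    have hjb : (j : ℝ) ≤ 2 / δ := (le_div_iff₀ hδ0).mpr (by linarith)
    have hjq : (j : ℝ) * ((q : ℝ) * Δ) ≤ (2 / δ) * ((q : ℝ) * Δ) :=
      mul_le_mul_of_nonneg_right hjb (by positivity)
    have hylb : (beta N k : ℝ) ≤ x + (n : ℝ) * Δ := by
      rw [hyc]
      have : 0 ≤ (j : ℝ) * ((q : ℝ) * Δ) := by positivity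
      linarith
    have hyub : x + (n : ℝ) * Δ < (beta N (k + 1) : ℝ) := by
      rw [hyc, hβ1]
      have : C ≤ ((N : ℝ) + 1) ^ k := hpow
      rw [hC] at this
      linarith
    exact main n hylb hyub (by
      rw [hfr]
      exact hQ _ (by linarith) (by linarith))
  · -- descending case
    obtain ⟨j, hj1, hj2⟩ := hit_down (L := 1 / N) hδ0 hδN
      (show a - 1 + 1 / N ≤ Int.fract c by linarith)
    set n : ℕ := n0 + j * q with hn
    have hyc : x + (n : ℝ) * Δ = c + (j : ℝ) * ((q : ℝ) * Δ) := by
      rw [hc, hn]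
      push_cast
      ring
    have hfr : Int.fract (x + (n : ℝ) * Δ) = Int.fract c - (j : ℝ) * δ + 1 := by
      have e1 : Int.fract (x + (n : ℝ) * Δ) =
          Int.fract (Int.fract c + (j : ℝ) * Int.fract ((q : ℝ) * Δ)) := by
        apply Int.fract_eq_fract.mpr
        refine ⟨⌊c⌋ + j * ⌊(q : ℝ) * Δ⌋, ?_⟩
        rw [hyc]
        simp only [Int.fract]
        push_cast
        ring
      rw [hf] at e1
      have e3 : Int.fract (Int.fract c + (j : ℝ) * (1 - δ)) =
          Int.fract c - (j : ℝ) * δ + 1 := by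
        have h9 := Int.fract_add_intCast (Int.fract c - (j : ℝ) * δ + 1) ((j : ℤ) - 1)
        have h5 : Int.fract c - (j : ℝ) * δ + 1 + (((j : ℤ) - 1 : ℤ) : ℝ) =
            Int.fract c + (j : ℝ) * (1 - δ) := by push_cast; ring
        rw [h5] at h9
        rw [h9]
        exact Int.fract_eq_self.mpr ⟨by linarith, by linarith⟩
      rw [e1, e3]
    have hjδ : (j : ℝ) * δ < 2 := by linarith
    have hjb : (j : ℝ) ≤ 2 / δ := (le_div_iff₀ hδ0).mpr (by linarith)
    have hjq : (j : ℝ) * ((q : ℝ) * Δ) ≤ (2 / δ) * ((q : ℝ) * Δ) :=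
      mul_le_mul_of_nonneg_right hjb (by positivity)
    have hylb : (beta N k : ℝ) ≤ x + (n : ℝ) * Δ := by
      rw [hyc]
      have : 0 ≤ (j : ℝ) * ((q : ℝ) * Δ) := by positivity
      linarith
    have hyub : x + (n : ℝ) * Δ < (beta N (k + 1) : ℝ) := by
      rw [hyc, hβ1]
      have : C ≤ ((N : ℝ) + 1) ^ k := hpow
      rw [hC] at this
      linarith
    exact main n hylb hyub (by
      rw [hfr]
      exact hQ _ (by linarith) (by linarith))
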